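/- Let n_ε be a nonnegative classical solution of the rescaled parabolic Lotka–Volterra equation ∂t n_ε − ε Δ n_ε = (n_ε/ε) R(x, I_ε(t)) on [0,∞)×ℝ^d, with I_ε(t) = ∫_{ℝ^d} ψ(x) n_ε(t,x) dx. Then there exists a constant C > 0, depending only on ψ, K, I_m, I_M (and not on ε), such that: if I_m − Cε² ≤ I_ε(0) ≤ I_M + Cε², then I_m − Cε² ≤ I_ε(t) ≤ I_M + Cε² for all t ≥ 0. -/

import Mathlib

open MeasureTheory Set

lemma ode_comp_le (f f' : ℝ → ℝ) (M : ℝ)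
    (hf : ∀ t ≥ (0:ℝ), HasDerivAt f (f' t) t)
    (h0 : f 0 ≤ M)
    (hD : ∀ t ≥ (0:ℝ), M < f t → f' t ≤ 0) :
    ∀ t ≥ (0:ℝ), f t ≤ M := by
  intro t₀ ht₀
  by_contra hlt
  push_neg at hlt
  have hcont : ContinuousOn f (Icc 0 t₀) := fun x hx =>
    ((hf x hx.1).continuousAt).continuousWithinAt
  set S : Set ℝ := Icc 0 t₀ ∩ f ⁻¹' (Iic M) with hSdef
  have h0S : (0:ℝ) ∈ S := ⟨⟨le_rfl, ht₀⟩, h0⟩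
  have hSne : S.Nonempty := ⟨0, h0S⟩
  have hSbdd : BddAbove S := BddAbove.mono inter_subset_left bddAbove_Icc
  have hSclosed : IsClosed S :=
    hcont.preimage_isClosed_of_isClosed isClosed_Icc isClosed_Iic
  set s := sSup S with hs
  have hsS : s ∈ S := hSclosed.csSup_mem hSne hSbdd
  have hst : s < t₀ := by
    rcases lt_or_eq_of_le hsS.1.2 with h | h
    · exact h
    · exact absurd hsS.2 (by simp [h]; linarith)
  have hs0 : (0:ℝ) ≤ s := hsS.1.1
  have hanti : AntitoneOn f (Icc s t₀) := by
    apply antitoneOn_of_deriv_nonpos (convex_Icc s t₀)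
      (hcont.mono (Icc_subset_Icc hs0 le_rfl))
    · intro x hx
      rw [interior_Icc] at hx
      exact ((hf x (le_trans hs0 hx.1.le)).differentiableAt).differentiableWithinAt
    · intro x hx
      rw [interior_Icc] at hx
      have hx0 : (0:ℝ) ≤ x := le_trans hs0 hx.1.le
      have hfx : M < f x := by
        by_contra hle
        push_neg at hle
        have : x ∈ S := ⟨⟨hx0, hx.2.le⟩, hle⟩
        exact absurd (le_csSup hSbdd this) (not_le.2 hx.1)
      rw [(hf x hx0).deriv]
      exact hD x hx0 hfx
  have := hanti (left_mem_Icc.2 hst.le) (right_mem_Icc.2 hst.le) hst.le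
  have hfs : f s ≤ M := hsS.2
  linarith


/-- The Laplacian of `f : ℝ^d → ℝ`, as the sum of second derivatives in the
coordinate directions. -/
noncomputable def lap {d : ℕ} (f : EuclideanSpace ℝ (Fin d) → ℝ)
    (x : EuclideanSpace ℝ (Fin d)) : ℝ :=
  ∑ i : Fin d,
    iteratedFDeriv ℝ 2 f x ![EuclideanSpace.single i (1 : ℝ), EuclideanSpace.single i (1 : ℝ)]

lemma lap_abs_le {d : ℕ} (f : EuclideanSpace ℝ (Fin d) → ℝ) (C : ℝ)
    (x : EuclideanSpace ℝ (Fin d)) (h : ‖iteratedFDeriv ℝ 2 f x‖ ≤ C) :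
    |lap f x| ≤ d * C := by
  have hb : ∀ i : Fin d,
      |iteratedFDeriv ℝ 2 f x ![EuclideanSpace.single i (1:ℝ), EuclideanSpace.single i 1]| ≤ C := by
    intro i
    have h2 := (iteratedFDeriv ℝ 2 f x).le_opNorm
      ![EuclideanSpace.single i (1:ℝ), EuclideanSpace.single i 1]
    have hp : (∏ j : Fin 2, ‖(![EuclideanSpace.single i (1:ℝ), EuclideanSpace.single i 1] :
        Fin 2 → EuclideanSpace ℝ (Fin d)) j‖) = 1 := by
      simp [Fin.prod_univ_two, EuclideanSpace.norm_single]
    rw [hp, mul_one] at h2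
    rw [← Real.norm_eq_abs]
    exact le_trans h2 h
  calc |lap f x| ≤ ∑ i : Fin d,
        |iteratedFDeriv ℝ 2 f x ![EuclideanSpace.single i (1:ℝ), EuclideanSpace.single i 1]| :=
        Finset.abs_sum_le_sum_abs _ _
    _ ≤ ∑ _i : Fin d, C := Finset.sum_le_sum (fun i _ => hb i)
    _ = d * C := by simp [Finset.sum_const, Finset.card_univ]

lemma lap_continuous {d : ℕ} (f : EuclideanSpace ℝ (Fin d) → ℝ) (hf : ContDiff ℝ 2 f) :
    Continuous (lap f) := by
  unfold lap
  apply continuous_finset_sum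
  intro i _
  exact (hf.continuous_iteratedFDeriv (le_refl 2)).eval_const _

set_option maxHeartbeats 2000000

/-- Theorem 2.1 of the paper: a priori bounds
`I_m - Cε² ≤ I_ε(t) ≤ I_M + Cε²` propagate from the initial time, with a constant `C`
depending only on `ψ, K, I_m, I_M` and not on `ε`. -/
theorem uniform_bounds_on_Ieps
    (d : ℕ) (hd : 1 ≤ d)
    -- the function ψ, with its bounds and W^{2,∞} regularity
    (ψ : EuclideanSpace ℝ (Fin d) → ℝ) (ψm ψM : ℝ)
    (hψm : 0 < ψm) (hψbd : ∀ x, ψm ≤ ψ x ∧ ψ x ≤ ψM)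
    (hψreg : ContDiff ℝ 2 ψ)
    (Cψ : ℝ)
    (hψW : ∀ x, ‖iteratedFDeriv ℝ 1 ψ x‖ ≤ Cψ ∧ ‖iteratedFDeriv ℝ 2 ψ x‖ ≤ Cψ)
    -- the invasion exponent R, C¹ in both variables
    (R : EuclideanSpace ℝ (Fin d) → ℝ → ℝ)
    (hR : ContDiff ℝ 1 (fun p : EuclideanSpace ℝ (Fin d) × ℝ => R p.1 p.2))
    -- the constants I_m ≤ I_M with min_x R(x, I_m) = 0 and max_x R(x, I_M) = 0
    (Im IM : ℝ) (hIm : 0 < Im) (hImM : Im ≤ IM)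
    (hRmin : (∀ x, 0 ≤ R x Im) ∧ ∃ x, R x Im = 0)
    (hRmax : (∀ x, R x IM ≤ 0) ∧ ∃ x, R x IM = 0)
    -- the constant K: −K ≤ ∂R/∂I ≤ −1/K and W^{2,∞} bounds on R(·,I)
    (K : ℝ) (hK : 0 < K)
    (hRI : ∀ x I, deriv (fun J => R x J) I ∈ Icc (-K) (-(1 / K)))
    (hRW : ∀ I ∈ Icc (Im / 2) (2 * IM), ∀ x,
      |R x I| ≤ K ∧ ‖fderiv ℝ (fun y => R y I) x‖ ≤ K ∧
        ‖iteratedFDeriv ℝ 2 (fun y => R y I) x‖ ≤ K) :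
    ∃ C > 0, ∀ ε > 0, ∀ (n nt : ℝ → EuclideanSpace ℝ (Fin d) → ℝ) (Iε : ℝ → ℝ),
      -- n is a nonnegative classical solution
      (∀ t x, 0 ≤ t → 0 ≤ n t x) →
      (∀ t x, 0 ≤ t → HasDerivAt (fun s => n s x) (nt t x) t) →
      (∀ t, 0 ≤ t → ContDiff ℝ 2 (n t)) →
      (∀ t, 0 ≤ t → Integrable (n t) volume ∧ Integrable (nt t) volume ∧
        Integrable (lap (n t)) volume) →
      -- the equation ∂t n − ε Δn = (n/ε) R(x, I_ε(t))
      (∀ t x, 0 ≤ t → nt t x - ε * lap (n t) x = n t x / ε * R x (Iε t)) →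
      -- I_ε(t) = ∫ ψ n_ε(t), differentiation under the integral sign and
      -- integration by parts are valid
      (∀ t, Iε t = ∫ x, ψ x * n t x) →
      (∀ t, 0 ≤ t → HasDerivAt Iε (∫ x, ψ x * nt t x) t) →
      (∀ t, 0 ≤ t → ∫ x, lap (n t) x * ψ x = ∫ x, n t x * lap ψ x) →
      -- initial bound implies the bound for all times
      (Im - C * ε ^ 2 ≤ Iε 0 ∧ Iε 0 ≤ IM + C * ε ^ 2) →
      ∀ t ≥ 0, Im - C * ε ^ 2 ≤ Iε t ∧ Iε t ≤ IM + C * ε ^ 2 := by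
  have hCψ0 : 0 ≤ Cψ := le_trans (norm_nonneg _) (hψW 0).1
  set A : ℝ := ↑d * Cψ / ψm with hA
  have hA0 : 0 ≤ A := by positivity
  refine ⟨K * (A + 1), by nlinarith, ?_⟩
  set C : ℝ := K * (A + 1) with hCdef
  have hCpos : 0 < C := by nlinarith
  have hCK : C / K = A + 1 := by field_simp [hCdef]; exact hCdef
  -- facts about R
  have hIMmem : IM ∈ Icc (Im / 2) (2 * IM) := ⟨by linarith, by linarith⟩
  have hRdiff : ∀ x, Differentiable ℝ (fun J => R x J) := fun x =>
    (hR.comp ((contDiff_const (c := x) : ContDiff ℝ 1 _).prodMk contDiff_id)).differentiable one_ne_zero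
  have antit : ∀ x, Antitone (fun J => R x J + J / K) := by
    intro x
    refine antitone_of_deriv_nonpos
      ((hRdiff x).add (differentiable_id.div_const K)) (fun J => ?_)
    have h1 : HasDerivAt (fun J => R x J + J / K)
        (deriv (fun J => R x J) J + 1 / K) J :=
      ((hRdiff x J).hasDerivAt).add ((hasDerivAt_id J).div_const K)
    rw [h1.deriv]
    have h2 := (hRI x J).2
    linarith
  have monot : ∀ x, Monotone (fun J => R x J + K * J) := by
    intro x
    refine monotone_of_deriv_nonneg
      ((hRdiff x).add (differentiable_const K |>.mul differentiable_id)) (fun J => ?_)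
    have h1 : HasDerivAt (fun J => R x J + K * J)
        (deriv (fun J => R x J) J + K * 1) J :=
      ((hRdiff x J).hasDerivAt).add ((hasDerivAt_id J).const_mul K)
    rw [h1.deriv]
    have h2 := (hRI x J).1
    linarith
  have hstep_up : ∀ x b, IM ≤ b → R x b ≤ -(b - IM) / K := by
    intro x b hb
    have h1 := antit x hb
    simp only at h1
    have h3 : -(b - IM) / K = IM / K - b / K := by ring
    have h4 := hRmax.1 x
    linarith
  have hstep_dn : ∀ x a, a ≤ Im → (Im - a) / K ≤ R x a := by
    intro x a ha
    have h1 := antit x ha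
    simp only at h1
    have h3 : (Im - a) / K = Im / K - a / K := by ring
    have h4 := hRmin.1 x
    linarith
  have hRabs : ∀ x I, |R x I| ≤ K + K * |I - IM| := by
    intro x I
    have hM := (hRW IM hIMmem x).1
    rw [abs_le] at hM
    rcases le_total I IM with h | h
    · have h1 := antit x h
      have h2 := monot x h
      simp only at h1 h2
      rw [abs_le, abs_of_nonpos (by linarith : I - IM ≤ 0)]
      have h5 : 0 ≤ (IM - I) / K := div_nonneg (by linarith) hK.le
      have h6 : (IM - I) / K = IM / K - I / K := by ring
      constructor <;> nlinarith
    · have h1 := antit x h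
      have h2 := monot x h
      simp only at h1 h2
      rw [abs_le, abs_of_nonneg (by linarith : 0 ≤ I - IM)]
      have h5 : 0 ≤ (I - IM) / K := div_nonneg (by linarith) hK.le
      have h6 : (I - IM) / K = I / K - IM / K := by ring
      constructor <;> nlinarith
  intro ε hε n nt Iε hn0 hnD hnC2 hInt hPDE hIdef hIε' hIBP hinit
  have hεne : ε ≠ 0 := ne_of_gt hε
  have hψC : Continuous ψ := hψreg.continuous
  have hψpos : ∀ x, 0 < ψ x := fun x => lt_of_lt_of_le hψm (hψbd x).1
  have hψnorm : ∀ x, ‖ψ x‖ ≤ ψM := fun x => by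
    rw [Real.norm_eq_abs, abs_of_pos (hψpos x)]; exact (hψbd x).2
  have hψM0 : 0 ≤ ψM := le_trans (norm_nonneg _) (hψnorm 0)
  have hInn : ∀ t, 0 ≤ t → 0 ≤ Iε t := fun t ht => by
    rw [hIdef t]
    exact integral_nonneg fun x => mul_nonneg (hψpos x).le (hn0 t x ht)
  have hlapψ : ∀ x, |lap ψ x| ≤ ↑d * Cψ := fun x => lap_abs_le ψ Cψ x (hψW x).2
  have hlapψcont : Continuous (lap ψ) := lap_continuous ψ hψreg
  have key : ∀ t, 0 ≤ t →
      ((IM + C * ε ^ 2 < Iε t → (∫ x, ψ x * nt t x) ≤ 0) ∧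
       (Iε t < Im - C * ε ^ 2 → 0 ≤ (∫ x, ψ x * nt t x))) := by
    intro t ht
    obtain ⟨hnint, hntint, hlapint⟩ := hInt t ht
    have hI0 : 0 ≤ Iε t := hInn t ht
    have hRcont : Continuous (fun x => R x (Iε t)) :=
      hR.continuous.comp (continuous_id.prodMk continuous_const)
    have hg1 : Integrable (fun x => lap (n t) x * ψ x) volume := by
      have h := hlapint.bdd_mul hψC.aestronglyMeasurable (Filter.Eventually.of_forall hψnorm)
      simpa [mul_comm] using h
    have hg3 : Integrable (fun x => ψ x * n t x) volume :=
      hnint.bdd_mul hψC.aestronglyMeasurable (Filter.Eventually.of_forall hψnorm)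
    have hg2 : Integrable (fun x => (ψ x * R x (Iε t)) * n t x) volume := by
      refine hnint.bdd_mul (hψC.mul hRcont).aestronglyMeasurable
        (c := ψM * (K + K * |Iε t - IM|)) (Filter.Eventually.of_forall fun x => ?_)
      rw [norm_mul]
      exact mul_le_mul (hψnorm x) (by rw [Real.norm_eq_abs]; exact hRabs x (Iε t))
        (norm_nonneg _) hψM0
    have hpt : ∀ x, ψ x * nt t x =
        ε * (lap (n t) x * ψ x) + ε⁻¹ * ((ψ x * R x (Iε t)) * n t x) := by
      intro x
      have e2 : nt t x = ε * lap (n t) x + n t x / ε * R x (Iε t) := by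
        linarith [hPDE t x ht]
      rw [e2]; field_simp
    have hDeq : (∫ x, ψ x * nt t x) =
        ε * (∫ x, n t x * lap ψ x) + ε⁻¹ * ∫ x, (ψ x * R x (Iε t)) * n t x := by
      simp_rw [hpt]
      rw [integral_add (hg1.const_mul ε) (hg2.const_mul ε⁻¹), integral_const_mul,
        integral_const_mul, hIBP t ht]
    have hnmul : Integrable (fun x => n t x * lap ψ x) volume := by
      have h := hnint.bdd_mul hlapψcont.aestronglyMeasurable
        (c := ↑d * Cψ) (Filter.Eventually.of_forall fun x => by rw [Real.norm_eq_abs]; exact hlapψ x)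
      simpa [mul_comm] using h
    have hIub : (∫ x, n t x) ≤ Iε t / ψm := by
      have h1 : ψm * ∫ x, n t x ≤ Iε t := by
        rw [hIdef t, ← integral_const_mul]
        exact integral_mono (hnint.const_mul ψm) hg3
          (fun x => mul_le_mul_of_nonneg_right (hψbd x).1 (hn0 t x ht))
      rw [le_div_iff₀ hψm]
      linarith
    have hT1 : |∫ x, n t x * lap ψ x| ≤ A * Iε t := by
      have c1 : |∫ x, n t x * lap ψ x| ≤ ∫ x, |n t x * lap ψ x| := by
        have h := norm_integral_le_integral_norm (μ := volume) (fun x => n t x * lap ψ x)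
        simp only [Real.norm_eq_abs] at h
        exact h
      have c2 : (∫ x, |n t x * lap ψ x|) ≤ ∫ x, n t x * (↑d * Cψ) :=
        integral_mono hnmul.abs (hnint.mul_const _) (fun x => by
          rw [abs_mul, abs_of_nonneg (hn0 t x ht)]
          exact mul_le_mul_of_nonneg_left (hlapψ x) (hn0 t x ht))
      have c3 : (∫ x, n t x * (↑d * Cψ)) = (↑d * Cψ) * ∫ x, n t x := by
        rw [integral_mul_const]; ring
      have c4 : (↑d * Cψ) * (∫ x, n t x) ≤ (↑d * Cψ) * (Iε t / ψm) :=
        mul_le_mul_of_nonneg_left hIub (by positivity)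
      have c5 : (↑d * Cψ) * (Iε t / ψm) = A * Iε t := by
        rw [hA]; ring
      linarith
    constructor
    · intro hIb
      have hIM' : IM ≤ Iε t := by nlinarith [sq_nonneg ε]
      have hc : ∀ x, (ψ x * R x (Iε t)) * n t x ≤ ((-(C * ε ^ 2) / K) * ψ x) * n t x := by
        intro x
        have h1 : R x (Iε t) ≤ -(Iε t - IM) / K := hstep_up x (Iε t) hIM'
        have h2 : -(Iε t - IM) / K ≤ -(C * ε ^ 2) / K := by gcongr; linarith
        have h3 := mul_le_mul_of_nonneg_right
          (mul_le_mul_of_nonneg_left (le_trans h1 h2) (hψpos x).le) (hn0 t x ht)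
        calc (ψ x * R x (Iε t)) * n t x ≤ (ψ x * (-(C * ε ^ 2) / K)) * n t x := h3
          _ = ((-(C * ε ^ 2) / K) * ψ x) * n t x := by ring
      have hT2 : (∫ x, (ψ x * R x (Iε t)) * n t x) ≤ (-(C * ε ^ 2) / K) * Iε t := by
        have c1 : (∫ x, (ψ x * R x (Iε t)) * n t x) ≤
            ∫ x, ((-(C * ε ^ 2) / K) * ψ x) * n t x := by
          refine integral_mono hg2 ?_ hc
          simpa [mul_assoc] using hg3.const_mul (-(C * ε ^ 2) / K)
        have c2 : (∫ x, ((-(C * ε ^ 2) / K) * ψ x) * n t x) =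
            (-(C * ε ^ 2) / K) * Iε t := by
          simp_rw [mul_assoc]
          rw [integral_const_mul, ← hIdef t]
        linarith
      rw [hDeq]
      have b1 : ε * (∫ x, n t x * lap ψ x) ≤ ε * (A * Iε t) :=
        mul_le_mul_of_nonneg_left (le_trans (le_abs_self _) hT1) hε.le
      have b2 : ε⁻¹ * (∫ x, (ψ x * R x (Iε t)) * n t x) ≤
          ε⁻¹ * ((-(C * ε ^ 2) / K) * Iε t) :=
        mul_le_mul_of_nonneg_left hT2 (inv_nonneg.2 hε.le)
      have e3 : ε⁻¹ * ((-(C * ε ^ 2) / K) * Iε t) = -((A + 1) * ε * Iε t) := by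
        rw [← hCK]; field_simp
      nlinarith [mul_nonneg hε.le hI0]
    · intro hIb
      have hIm' : Iε t ≤ Im := by nlinarith [sq_nonneg ε]
      have hc : ∀ x, ((C * ε ^ 2 / K) * ψ x) * n t x ≤ (ψ x * R x (Iε t)) * n t x := by
        intro x
        have h1 : (Im - Iε t) / K ≤ R x (Iε t) := hstep_dn x (Iε t) hIm'
        have h2 : C * ε ^ 2 / K ≤ (Im - Iε t) / K := by gcongr; linarith
        have h3 := mul_le_mul_of_nonneg_right
          (mul_le_mul_of_nonneg_left (le_trans h2 h1) (hψpos x).le) (hn0 t x ht)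
        calc ((C * ε ^ 2 / K) * ψ x) * n t x = (ψ x * (C * ε ^ 2 / K)) * n t x := by ring
          _ ≤ (ψ x * R x (Iε t)) * n t x := h3
      have hT2 : (C * ε ^ 2 / K) * Iε t ≤ ∫ x, (ψ x * R x (Iε t)) * n t x := by
        have c1 : (∫ x, ((C * ε ^ 2 / K) * ψ x) * n t x) ≤
            ∫ x, (ψ x * R x (Iε t)) * n t x := by
          refine integral_mono ?_ hg2 hc
          simpa [mul_assoc] using hg3.const_mul (C * ε ^ 2 / K)
        have c2 : (∫ x, ((C * ε ^ 2 / K) * ψ x) * n t x) = (C * ε ^ 2 / K) * Iε t := by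
          simp_rw [mul_assoc]
          rw [integral_const_mul, ← hIdef t]
        linarith
      rw [hDeq]
      have b1 : ε * (-(A * Iε t)) ≤ ε * (∫ x, n t x * lap ψ x) :=
        mul_le_mul_of_nonneg_left (le_trans (neg_le_neg hT1) (neg_abs_le _)) hε.le
      have b2 : ε⁻¹ * ((C * ε ^ 2 / K) * Iε t) ≤
          ε⁻¹ * (∫ x, (ψ x * R x (Iε t)) * n t x) :=
        mul_le_mul_of_nonneg_left hT2 (inv_nonneg.2 hε.le)
      have e3 : ε⁻¹ * ((C * ε ^ 2 / K) * Iε t) = (A + 1) * ε * Iε t := by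
        rw [← hCK]; field_simp
      nlinarith [mul_nonneg hε.le hI0]
  intro t ht
  constructor
  · have h := ode_comp_le (fun s => -Iε s) (fun s => -(∫ x, ψ x * nt s x))
      (-(Im - C * ε ^ 2)) (fun s hs => (hIε' s hs).neg)
      (by linarith [hinit.1])
      (fun s hs hgt => by
        have h1 : Iε s < Im - C * ε ^ 2 := by linarith
        have h2 := (key s hs).2 h1
        linarith) t ht
    linarith
  · exact ode_comp_le Iε (fun s => ∫ x, ψ x * nt s x) (IM + C * ε ^ 2) hIε' hinit.2
      (fun s hs h => (key s hs).1 h) t ht
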